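/- Let A be a fixed N×N real matrix. The coefficients of the two-variable polynomial det(u − μA − λ·Id) in λ and μ pairwise Poisson-commute with respect to the Lie–Poisson bracket on gl(N)* (the Mishchenko–Fomenko shift-of-argument family). -/

import Mathlib

/-- The coordinate function `u^{ij}` on `gl(N,ℝ)*`. -/
noncomputable def u {N : ℕ} (i j : Fin N) : MvPolynomial (Fin N × Fin N) ℝ :=
  MvPolynomial.X (i, j)

/-- The Lie–Poisson bracket on polynomial functions on `gl(N,ℝ)*`. -/
noncomputable def pb {N : ℕ} (P Q : MvPolynomial (Fin N × Fin N) ℝ) :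
    MvPolynomial (Fin N × Fin N) ℝ :=
  ∑ i : Fin N, ∑ j : Fin N, ∑ k : Fin N, ∑ l : Fin N,
    MvPolynomial.pderiv (i, j) P * MvPolynomial.pderiv (k, l) Q *
      ((if j = k then u i l else 0) - (if l = i then u k j else 0))

/-- The matrix `u − μA − λ·Id` with entries in `(MvPolynomial)[λ][μ]`
(outer variable `μ = X`, inner variable `λ = C X`). -/
noncomputable def MFmat {N : ℕ} (A : Matrix (Fin N) (Fin N) ℝ) :
    Matrix (Fin N) (Fin N)
      (Polynomial (Polynomial (MvPolynomial (Fin N × Fin N) ℝ))) :=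
  fun i j =>
    Polynomial.C (Polynomial.C (u i j)) -
      Polynomial.X * Polynomial.C (Polynomial.C (MvPolynomial.C (A i j))) -
      Polynomial.C Polynomial.X * (if i = j then 1 else 0)

/-- `I^A_{nm}` : the coefficient of `λⁿ μᵐ` in `det(u − μA − λ)`. -/
noncomputable def IA {N : ℕ} (A : Matrix (Fin N) (Fin N) ℝ) (n m : ℕ) :
    MvPolynomial (Fin N × Fin N) ℝ :=
  (((MFmat A).det).coeff m).coeff n

/-! ### Auxiliary material for the proof -/

open MvPolynomial Matrix Finset

namespace MFC

/-- Leibniz rule for a derivation applied to a finite product. -/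
lemma deriv_prod {R A : Type*} [CommRing R] [CommRing A] [Algebra R A]
    (D : Derivation R A A) {ι : Type*} [DecidableEq ι] (s : Finset ι) (f : ι → A) :
    D (∏ i ∈ s, f i) = ∑ i ∈ s, (∏ j ∈ s.erase i, f j) * D (f i) := by
  induction s using Finset.induction_on with
  | empty => simp
  | @insert a s ha ih =>
    rw [Finset.prod_insert ha, D.leibniz, Finset.sum_insert ha, Finset.erase_insert ha,
      smul_eq_mul, smul_eq_mul, ih, Finset.mul_sum]
    rw [add_comm]
    congr 1
    refine Finset.sum_congr rfl fun i hi => ?_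
    rw [Finset.erase_insert_of_ne (by rintro rfl; exact ha hi),
      Finset.prod_insert (by simp [ha, Finset.mem_erase]), mul_assoc]

/-- A derivation applied to a determinant, row-expansion form. -/
lemma deriv_det {n : ℕ} {R A : Type*} [CommRing R] [CommRing A] [Algebra R A]
    (D : Derivation R A A) (M : Matrix (Fin n) (Fin n) A) :
    D M.det = ∑ i, (M.updateRow i (fun j => D (M i j))).det := by
  rw [det_apply, map_sum]
  simp_rw [det_apply]
  rw [Finset.sum_comm]
  refine Finset.sum_congr rfl fun σ _ => ?_
  have hz : ∀ (x : A), D ((Equiv.Perm.sign σ) • x) = (Equiv.Perm.sign σ) • D x := by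
    intro x
    rcases Int.units_eq_one_or (Equiv.Perm.sign σ) with h | h <;> simp [h]
  rw [hz, deriv_prod]
  rw [← Finset.smul_sum]
  congr 1
  rw [← Equiv.sum_comp σ (fun i => ∏ k, (M.updateRow i fun j => D (M i j)) (σ k) k)]
  refine Finset.sum_congr rfl fun k₀ _ => ?_
  rw [← Finset.mul_prod_erase univ _ (Finset.mem_univ k₀), updateRow_apply, if_pos rfl,
    mul_comm]
  congr 1
  refine Finset.prod_congr rfl fun k hk => ?_
  rw [updateRow_apply, if_neg (fun h => (Finset.mem_erase.1 hk).1 (σ.injective h))]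

/-- The matrix `u - μA - λ` in the 6-variable ring, with `λ, μ` two of the four extra
variables. -/
noncomputable def Mm {N : ℕ} (A : Matrix (Fin N) (Fin N) ℝ) (al am : Fin 4) :
    Matrix (Fin N) (Fin N) (MvPolynomial ((Fin N × Fin N) ⊕ Fin 4) ℝ) :=
  fun i j => X (Sum.inl (i,j)) - X (Sum.inr am) * C (A i j) -
    X (Sum.inr al) * (if i = j then 1 else 0)

noncomputable def Ym (N : ℕ) (a : Fin 4) : MvPolynomial ((Fin N × Fin N) ⊕ Fin 4) ℝ :=
  X (Sum.inr a)

noncomputable def Um (N : ℕ) :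
    Matrix (Fin N) (Fin N) (MvPolynomial ((Fin N × Fin N) ⊕ Fin 4) ℝ) :=
  fun i j => X (Sum.inl (i,j))

lemma pderiv_Mm {N : ℕ} (A : Matrix (Fin N) (Fin N) ℝ) (al am : Fin 4)
    (v : Fin N × Fin N) (k l : Fin N) :
    pderiv (Sum.inl v) (Mm A al am k l) = if (k, l) = v then 1 else 0 := by
  have h1 : pderiv (σ := (Fin N × Fin N) ⊕ Fin 4) (R := ℝ) (Sum.inl v)
      (X (Sum.inr am) * C (A k l)) = 0 := by
    rw [pderiv_mul, pderiv_X_of_ne (by simp), pderiv_C]; ring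
  have h2 : pderiv (σ := (Fin N × Fin N) ⊕ Fin 4) (R := ℝ) (Sum.inl v)
      (X (Sum.inr al) * (if k = l then 1 else 0)) = 0 := by
    split_ifs <;> simp [pderiv_X_of_ne]
  rw [Mm, map_sub, map_sub, h1, h2, pderiv_X]
  simp [Pi.single_apply, Sum.inl.injEq, eq_comm]

/-- The gradient of the determinant is the (transposed) adjugate. -/
lemma grad {N : ℕ} (A : Matrix (Fin N) (Fin N) ℝ) (al am : Fin 4) (i j : Fin N) :
    pderiv (Sum.inl (i,j)) ((Mm A al am).det) = (Mm A al am).adjugate j i := by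
  rw [deriv_det (pderiv (Sum.inl (i,j))) (Mm A al am)]
  rw [Finset.sum_eq_single i]
  · rw [adjugate_apply]
    have : (fun l => pderiv (Sum.inl (i,j)) (Mm A al am i l)) = Pi.single j 1 := by
      funext l
      rw [pderiv_Mm]
      simp [Pi.single_apply, Prod.ext_iff, eq_comm]
    rw [this]
  · intro k _ hk
    apply det_eq_zero_of_row_eq_zero k
    intro l
    rw [updateRow_self, pderiv_Mm]
    simp [Prod.ext_iff, hk]
  · simp

lemma key_trace {N : ℕ} (A : Matrix (Fin N) (Fin N) ℝ) :
    trace (((Mm A 2 3).adjugate * (Mm A 0 1).adjugate -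
      (Mm A 0 1).adjugate * (Mm A 2 3).adjugate) * Um N) = 0 := by
  set M1 := Mm A 0 1
  set M2 := Mm A 2 3
  set B := M1.adjugate
  set Cm := M2.adjugate
  have hB : B * M1 = M1 * B := by rw [Matrix.adjugate_mul, Matrix.mul_adjugate]
  have hC : Cm * M2 = M2 * Cm := by rw [Matrix.adjugate_mul, Matrix.mul_adjugate]
  have t1 : trace ((Cm * B - B * Cm) * M1) = 0 := by
    rw [Matrix.sub_mul, trace_sub, sub_eq_zero, mul_assoc, hB, ← mul_assoc,
      trace_mul_comm (Cm * M1) B, ← mul_assoc, mul_assoc B Cm M1]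
  have t2 : trace ((Cm * B - B * Cm) * M2) = 0 := by
    rw [Matrix.sub_mul, trace_sub, sub_eq_zero, mul_assoc, trace_mul_comm Cm (B * M2),
      mul_assoc, ← hC, ← mul_assoc]
  have t0 : trace ((Cm * B - B * Cm) : Matrix (Fin N) (Fin N) _) = 0 := by
    rw [trace_sub, trace_mul_comm, sub_self]
  have hscale : (Ym N 1 - Ym N 3) • Um N =
      Ym N 1 • M2 - Ym N 3 • M1 +
        (Ym N 1 * Ym N 2 - Ym N 3 * Ym N 0) •
          (1 : Matrix (Fin N) (Fin N) (MvPolynomial ((Fin N × Fin N) ⊕ Fin 4) ℝ)) := by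
    ext i j
    simp only [Matrix.smul_apply, Matrix.sub_apply, Matrix.add_apply, Matrix.one_apply,
      Mm, Um, Ym, M1, M2, smul_eq_mul]
    split_ifs <;> ring
  have hmul : (Ym N 1 - Ym N 3) *
      trace ((Cm * B - B * Cm) * Um N) = 0 := by
    rw [← smul_eq_mul, ← Matrix.trace_smul, ← Matrix.mul_smul, hscale]
    rw [Matrix.mul_add, Matrix.mul_sub, trace_add, trace_sub,
      Matrix.mul_smul, Matrix.mul_smul, Matrix.mul_smul,
      Matrix.trace_smul, Matrix.trace_smul, Matrix.trace_smul, t1, t2, Matrix.mul_one, t0]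
    simp
  rcases mul_eq_zero.mp hmul with h | h
  · exfalso
    apply sub_ne_zero_of_ne _ h
    intro h'
    rw [Ym, Ym] at h'
    have := MvPolynomial.X_injective h'
    simp at this
  · exact h

lemma sum3_rot {N : ℕ} {α : Type*} [AddCommMonoid α] (f : Fin N → Fin N → Fin N → α) :
    ∑ a, ∑ b, ∑ c, f a b c = ∑ c, ∑ a, ∑ b, f a b c := by
  calc ∑ a, ∑ b, ∑ c, f a b c = ∑ a, ∑ c, ∑ b, f a b c :=
        Finset.sum_congr rfl fun a _ => Finset.sum_comm
    _ = ∑ c, ∑ a, ∑ b, f a b c := Finset.sum_comm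

set_option maxHeartbeats 1000000 in
lemma quad_eq_trace {N : ℕ}
    (B Cm U : Matrix (Fin N) (Fin N) (MvPolynomial ((Fin N × Fin N) ⊕ Fin 4) ℝ)) :
    ∑ i, ∑ j, ∑ k, ∑ l, B j i * Cm l k *
      ((if j = k then U i l else 0) - (if l = i then U k j else 0)) =
    trace ((Cm * B - B * Cm) * U) := by
  have rhs : trace ((Cm * B - B * Cm) * U) =
      (∑ p, ∑ q, ∑ r, Cm p r * B r q * U q p) - (∑ p, ∑ q, ∑ r, B p r * Cm r q * U q p) := by
    rw [Matrix.trace]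
    simp only [Matrix.diag_apply, Matrix.mul_apply, Matrix.sub_apply, sub_mul,
      Finset.sum_mul, Finset.sum_sub_distrib]
  rw [rhs]
  simp only [mul_sub, Finset.sum_sub_distrib]
  congr 1
  · have e1 : ∀ i j : Fin N, (∑ k, ∑ l, B j i * Cm l k * (if j = k then U i l else 0))
        = ∑ l, B j i * Cm l j * U i l := by
      intro i j
      rw [Finset.sum_comm]
      refine Finset.sum_congr rfl fun l _ => ?_
      simp only [mul_ite, mul_zero]
      rw [Finset.sum_ite_eq]
      simp
    calc ∑ i, ∑ j, ∑ k, ∑ l, B j i * Cm l k * (if j = k then U i l else 0)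
        = ∑ i, ∑ j, ∑ l, B j i * Cm l j * U i l :=
          Finset.sum_congr rfl fun i _ => Finset.sum_congr rfl fun j _ => e1 i j
      _ = ∑ l, ∑ i, ∑ j, B j i * Cm l j * U i l := sum3_rot _
      _ = ∑ p, ∑ q, ∑ r, Cm p r * B r q * U q p := by
          refine Finset.sum_congr rfl fun p _ => Finset.sum_congr rfl fun q _ =>
            Finset.sum_congr rfl fun r _ => ?_
          ring
  · have e2 : ∀ i j : Fin N, (∑ k, ∑ l, B j i * Cm l k * (if l = i then U k j else 0))
        = ∑ k, B j i * Cm i k * U k j := by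
      intro i j
      refine Finset.sum_congr rfl fun k _ => ?_
      simp only [mul_ite, mul_zero]
      rw [Finset.sum_ite_eq']
      simp
    calc ∑ i, ∑ j, ∑ k, ∑ l, B j i * Cm l k * (if l = i then U k j else 0)
        = ∑ i, ∑ j, ∑ k, B j i * Cm i k * U k j :=
          Finset.sum_congr rfl fun i _ => Finset.sum_congr rfl fun j _ => e2 i j
      _ = ∑ k, ∑ i, ∑ j, B j i * Cm i k * U k j := sum3_rot _
      _ = ∑ j, ∑ k, ∑ i, B j i * Cm i k * U k j := sum3_rot _
      _ = ∑ p, ∑ q, ∑ r, B p r * Cm r q * U q p := by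
          refine Finset.sum_congr rfl fun p _ => Finset.sum_congr rfl fun q _ =>
            Finset.sum_congr rfl fun r _ => ?_
          ring
end MFC

namespace MFC

/-- exponent finsupp for the four auxiliary variables -/
noncomputable def Ee {N : ℕ} (t : ℕ × ℕ × ℕ × ℕ) : ((Fin N × Fin N) ⊕ Fin 4) →₀ ℕ :=
  Finsupp.single (Sum.inr 0) t.1 + Finsupp.single (Sum.inr 1) t.2.1 +
    Finsupp.single (Sum.inr 2) t.2.2.1 + Finsupp.single (Sum.inr 3) t.2.2.2

lemma Ee_apply0 {N : ℕ} (t : ℕ × ℕ × ℕ × ℕ) : Ee (N := N) t (Sum.inr 0) = t.1 := by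
  have h01 : (0 : Fin 4) ≠ 1 := by decide
  have h02 : (0 : Fin 4) ≠ 2 := by decide
  have h03 : (0 : Fin 4) ≠ 3 := by decide
  simp [Ee, Finsupp.single_apply, h01.symm, h02.symm, h03.symm]
lemma Ee_apply1 {N : ℕ} (t : ℕ × ℕ × ℕ × ℕ) : Ee (N := N) t (Sum.inr 1) = t.2.1 := by
  have h01 : (0 : Fin 4) ≠ 1 := by decide
  have h12 : (1 : Fin 4) ≠ 2 := by decide
  have h13 : (1 : Fin 4) ≠ 3 := by decide
  simp [Ee, Finsupp.single_apply, h01, h12.symm, h13.symm]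
lemma Ee_apply2 {N : ℕ} (t : ℕ × ℕ × ℕ × ℕ) : Ee (N := N) t (Sum.inr 2) = t.2.2.1 := by
  have h02 : (0 : Fin 4) ≠ 2 := by decide
  have h12 : (1 : Fin 4) ≠ 2 := by decide
  have h23 : (2 : Fin 4) ≠ 3 := by decide
  simp [Ee, Finsupp.single_apply, h02, h12, h23.symm]
lemma Ee_apply3 {N : ℕ} (t : ℕ × ℕ × ℕ × ℕ) : Ee (N := N) t (Sum.inr 3) = t.2.2.2 := by
  have h03 : (0 : Fin 4) ≠ 3 := by decide
  have h13 : (1 : Fin 4) ≠ 3 := by decide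
  have h23 : (2 : Fin 4) ≠ 3 := by decide
  simp [Ee, Finsupp.single_apply, h03, h13, h23]

lemma coeff_term {N : ℕ} (d : (Fin N × Fin N) →₀ ℕ) (q : MvPolynomial (Fin N × Fin N) ℝ)
    (t t' : ℕ × ℕ × ℕ × ℕ) :
    MvPolynomial.coeff (Finsupp.mapDomain Sum.inl d + Ee t)
      (rename Sum.inl q * monomial (Ee t') (1 : ℝ)) =
      if t' = t then MvPolynomial.coeff d q else 0 := by
  by_cases h : t' = t
  · subst h
    rw [if_pos rfl, MvPolynomial.coeff_mul_monomial, coeff_rename_mapDomain _ Sum.inl_injective,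
      mul_one]
  · rw [if_neg h, MvPolynomial.coeff_mul_monomial']
    split_ifs with hle
    · rw [mul_one]
      apply coeff_rename_eq_zero
      intro w hw
      exfalso
      apply h
      have key : ∀ a : Fin 4, Ee (N := N) t' (Sum.inr a) = Ee (N := N) t (Sum.inr a) := by
        intro a
        have h1 := DFunLike.congr_fun hw (Sum.inr a)
        rw [Finsupp.tsub_apply, Finsupp.add_apply,
          Finsupp.mapDomain_notin_range _ _ (by simp),
          Finsupp.mapDomain_notin_range _ _ (by simp), zero_add] at h1
        have h2 := (Finsupp.le_def.mp hle) (Sum.inr a)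
        rw [Finsupp.add_apply, Finsupp.mapDomain_notin_range _ _ (by simp), zero_add] at h2
        omega
      have e0 := key 0; have e1 := key 1; have e2 := key 2; have e3 := key 3
      rw [Ee_apply0, Ee_apply0] at e0
      rw [Ee_apply1, Ee_apply1] at e1
      rw [Ee_apply2, Ee_apply2] at e2
      rw [Ee_apply3, Ee_apply3] at e3
      obtain ⟨a, b, c, f⟩ := t
      obtain ⟨a', b', c', f'⟩ := t'
      simp_all
    · rfl

lemma sum4_collapse {α : Type*} [AddCommMonoid α] {L K n m n' m' : ℕ}
    (hm : m < L) (hn : n < K) (hm' : m' < L) (hn' : n' < K) (B : ℕ → ℕ → ℕ → ℕ → α) :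
    (∑ m₂ ∈ Finset.range L, ∑ m₂' ∈ Finset.range L, ∑ n₂ ∈ Finset.range K,
      ∑ n₂' ∈ Finset.range K,
      if (n₂, m₂, n₂', m₂') = (n, m, n', m') then B n₂ m₂ n₂' m₂' else 0) = B n m n' m' := by
  simp only [Prod.mk.injEq, ite_and, Finset.sum_ite_irrel, Finset.sum_ite_eq',
    Finset.mem_range, Finset.sum_const_zero, hm, hn, hm', hn', if_true]

lemma prod_form {N : ℕ} (F G c' : MvPolynomial (Fin N × Fin N) ℝ) (a b c f : ℕ) :
    (rename Sum.inl F * X (Sum.inr 0) ^ a * X (Sum.inr 1) ^ b) *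
      (rename Sum.inl G * X (Sum.inr 2) ^ c * X (Sum.inr 3) ^ f) * rename Sum.inl c' =
    rename Sum.inl (F * G * c') * monomial (Ee (N := N) (a, b, c, f)) (1 : ℝ) := by
  have hY : (X (Sum.inr 0) ^ a * X (Sum.inr 1) ^ b * X (Sum.inr 2) ^ c * X (Sum.inr 3) ^ f :
      MvPolynomial ((Fin N × Fin N) ⊕ Fin 4) ℝ) = monomial (Ee (N := N) (a, b, c, f)) 1 := by
    simp [X_pow_eq_monomial, monomial_mul, Ee]
  calc (rename Sum.inl F * X (Sum.inr 0) ^ a * X (Sum.inr 1) ^ b) *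
      (rename Sum.inl G * X (Sum.inr 2) ^ c * X (Sum.inr 3) ^ f) * rename Sum.inl c'
      = (rename Sum.inl F * rename Sum.inl G * rename Sum.inl c') *
        (X (Sum.inr 0) ^ a * X (Sum.inr 1) ^ b * X (Sum.inr 2) ^ c * X (Sum.inr 3) ^ f) := by
        ring
    _ = rename Sum.inl (F * G * c') * monomial (Ee (N := N) (a, b, c, f)) (1 : ℝ) := by
        rw [hY, ← _root_.map_mul, ← _root_.map_mul]

noncomputable def th1 (N : ℕ) (al : Fin 4) :
    Polynomial (MvPolynomial (Fin N × Fin N) ℝ) →+* MvPolynomial ((Fin N × Fin N) ⊕ Fin 4) ℝ :=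
  Polynomial.eval₂RingHom (MvPolynomial.rename Sum.inl).toRingHom (X (Sum.inr al))

noncomputable def th (N : ℕ) (al am : Fin 4) :
    Polynomial (Polynomial (MvPolynomial (Fin N × Fin N) ℝ)) →+*
      MvPolynomial ((Fin N × Fin N) ⊕ Fin 4) ℝ :=
  Polynomial.eval₂RingHom (th1 N al) (X (Sum.inr am))

lemma th_det {N : ℕ} (A : Matrix (Fin N) (Fin N) ℝ) (al am : Fin 4) :
    th N al am ((MFmat A).det) = (Mm A al am).det := by
  rw [RingHom.map_det (th N al am) (MFmat A)]
  congr 1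
  ext i j : 2
  by_cases h : i = j <;>
    simp only [RingHom.mapMatrix_apply, Matrix.map_apply, MFmat, Mm, u, th, th1, h,
      if_true, if_false, Polynomial.coe_eval₂RingHom, Polynomial.eval₂_sub,
      Polynomial.eval₂_mul, Polynomial.eval₂_C, Polynomial.eval₂_X, Polynomial.eval₂_one,
      Polynomial.eval₂_zero, mul_one, mul_zero, AlgHom.toRingHom_eq_coe, AlgHom.coe_toRingHom,
      rename_X, rename_C] <;>
    ring

lemma th_expand {N : ℕ} (al am : Fin 4)
    (P : Polynomial (Polynomial (MvPolynomial (Fin N × Fin N) ℝ))) (L K : ℕ)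
    (hL : P.natDegree < L) (hK : ∀ m2, (P.coeff m2).natDegree < K) :
    th N al am P = ∑ m2 ∈ Finset.range L, ∑ n2 ∈ Finset.range K,
      rename Sum.inl ((P.coeff m2).coeff n2) * X (Sum.inr al) ^ n2 * X (Sum.inr am) ^ m2 := by
  rw [th, Polynomial.coe_eval₂RingHom, Polynomial.eval₂_eq_sum_range' _ hL]
  refine Finset.sum_congr rfl fun m2 _ => ?_
  rw [th1, Polynomial.coe_eval₂RingHom, Polynomial.eval₂_eq_sum_range' _ (hK m2),
    Finset.sum_mul]
  simp [AlgHom.toRingHom_eq_coe]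

lemma pderiv_th {N : ℕ} (al am : Fin 4) (v : Fin N × Fin N)
    (P : Polynomial (Polynomial (MvPolynomial (Fin N × Fin N) ℝ))) (L K : ℕ)
    (hL : P.natDegree < L) (hK : ∀ m2, (P.coeff m2).natDegree < K) :
    pderiv (Sum.inl v) (th N al am P) = ∑ m2 ∈ Finset.range L, ∑ n2 ∈ Finset.range K,
      rename Sum.inl (pderiv v ((P.coeff m2).coeff n2)) *
        X (Sum.inr al) ^ n2 * X (Sum.inr am) ^ m2 := by
  rw [th_expand al am P L K hL hK, map_sum]
  refine Finset.sum_congr rfl fun m2 _ => ?_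
  rw [map_sum]
  refine Finset.sum_congr rfl fun n2 _ => ?_
  have z1 : pderiv (R := ℝ) (Sum.inl v)
      (X (Sum.inr al) ^ n2 : MvPolynomial ((Fin N × Fin N) ⊕ Fin 4) ℝ) = 0 := by
    rw [pderiv_pow, pderiv_X_of_ne (by simp)]; ring
  have z2 : pderiv (R := ℝ) (Sum.inl v)
      (X (Sum.inr am) ^ m2 : MvPolynomial ((Fin N × Fin N) ⊕ Fin 4) ℝ) = 0 := by
    rw [pderiv_pow, pderiv_X_of_ne (by simp)]; ring
  rw [pderiv_mul, z2, mul_zero, add_zero, pderiv_mul, z1, mul_zero, add_zero,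
    pderiv_rename Sum.inl_injective]

lemma coeff_quad {N : ℕ} (d : (Fin N × Fin N) →₀ ℕ)
    (F G : ℕ → ℕ → MvPolynomial (Fin N × Fin N) ℝ) (c' : MvPolynomial (Fin N × Fin N) ℝ)
    {L K n m n' m' : ℕ} (hm : m < L) (hn : n < K) (hm' : m' < L) (hn' : n' < K) :
    MvPolynomial.coeff (Finsupp.mapDomain Sum.inl d + Ee (n, m, n', m'))
      ((∑ m2 ∈ Finset.range L, ∑ n2 ∈ Finset.range K,
          rename Sum.inl (F n2 m2) * X (Sum.inr 0) ^ n2 * X (Sum.inr 1) ^ m2) *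
        (∑ m2' ∈ Finset.range L, ∑ n2' ∈ Finset.range K,
          rename Sum.inl (G n2' m2') * X (Sum.inr 2) ^ n2' * X (Sum.inr 3) ^ m2') *
        rename Sum.inl c') =
      MvPolynomial.coeff d (F n m * G n' m' * c') := by
  rw [Finset.sum_mul_sum, Finset.sum_mul]
  have step : ∀ m2 m2' : ℕ,
      ((∑ n2 ∈ Finset.range K, rename Sum.inl (F n2 m2) * X (Sum.inr 0) ^ n2 *
          X (Sum.inr 1) ^ m2) *
        (∑ n2' ∈ Finset.range K, rename Sum.inl (G n2' m2') * X (Sum.inr 2) ^ n2' *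
          X (Sum.inr 3) ^ m2')) * rename Sum.inl c' =
      ∑ n2 ∈ Finset.range K, ∑ n2' ∈ Finset.range K,
        rename Sum.inl (F n2 m2 * G n2' m2' * c') *
          monomial (Ee (N := N) (n2, m2, n2', m2')) (1 : ℝ) := by
    intro m2 m2'
    rw [Finset.sum_mul_sum, Finset.sum_mul]
    refine Finset.sum_congr rfl fun n2 _ => ?_
    rw [Finset.sum_mul]
    refine Finset.sum_congr rfl fun n2' _ => ?_
    exact prod_form (F n2 m2) (G n2' m2') c' n2 m2 n2' m2'
  have : (∑ m2 ∈ Finset.range L, (∑ m2' ∈ Finset.range L,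
        (∑ n2 ∈ Finset.range K, rename Sum.inl (F n2 m2) * X (Sum.inr 0) ^ n2 *
            X (Sum.inr 1) ^ m2) *
          (∑ n2' ∈ Finset.range K, rename Sum.inl (G n2' m2') * X (Sum.inr 2) ^ n2' *
            X (Sum.inr 3) ^ m2')) * rename Sum.inl c') =
      ∑ m2 ∈ Finset.range L, ∑ m2' ∈ Finset.range L, ∑ n2 ∈ Finset.range K,
        ∑ n2' ∈ Finset.range K,
        rename Sum.inl (F n2 m2 * G n2' m2' * c') *
          monomial (Ee (N := N) (n2, m2, n2', m2')) (1 : ℝ) := by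
    refine Finset.sum_congr rfl fun m2 _ => ?_
    rw [Finset.sum_mul]
    exact Finset.sum_congr rfl fun m2' _ => step m2 m2'
  rw [this]
  simp only [MvPolynomial.coeff_sum]
  have : ∀ m2 m2' n2 n2' : ℕ,
      MvPolynomial.coeff (Finsupp.mapDomain Sum.inl d + Ee (n, m, n', m'))
        (rename Sum.inl (F n2 m2 * G n2' m2' * c') *
          monomial (Ee (N := N) (n2, m2, n2', m2')) (1 : ℝ)) =
      if (n2, m2, n2', m2') = (n, m, n', m') then
        MvPolynomial.coeff d (F n2 m2 * G n2' m2' * c') else 0 :=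
    fun m2 m2' n2 n2' => coeff_term d _ (n, m, n', m') (n2, m2, n2', m2')
  simp only [this]
  exact sum4_collapse hm hn hm' hn' (fun n2 m2 n2' m2' =>
    MvPolynomial.coeff d (F n2 m2 * G n2' m2' * c'))

end MFC

theorem mishchenko_fomenko_commute (N : ℕ) (A : Matrix (Fin N) (Fin N) ℝ)
    (n m n' m' : ℕ) : pb (IA A n m) (IA A n' m') = 0 := by
  classical
  obtain ⟨L, hL, hm, hm'⟩ : ∃ L, ((MFmat A).det).natDegree < L ∧ m < L ∧ m' < L :=
    ⟨((MFmat A).det).natDegree + m + m' + 1, by omega, by omega, by omega⟩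
  obtain ⟨K, hK, hn, hn'⟩ : ∃ K, (∀ m2, (((MFmat A).det).coeff m2).natDegree < K) ∧
      n < K ∧ n' < K := by
    refine ⟨(((MFmat A).det).support.sup fun m2 => (((MFmat A).det).coeff m2).natDegree)
      + n + n' + 1, fun m2 => ?_, by omega, by omega⟩
    by_cases h : m2 ∈ ((MFmat A).det).support
    · have := Finset.le_sup (f := fun m2 => (((MFmat A).det).coeff m2).natDegree) h
      omega
    · rw [Polynomial.notMem_support_iff.mp h]
      simp only [Polynomial.natDegree_zero]
      omega
  apply MvPolynomial.ext
  intro d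
  rw [MvPolynomial.coeff_zero]
  have main : MvPolynomial.coeff d (pb (IA A n m) (IA A n' m')) =
      MvPolynomial.coeff (Finsupp.mapDomain Sum.inl d + MFC.Ee (n, m, n', m'))
        (∑ i, ∑ j, ∑ k, ∑ l,
          MvPolynomial.pderiv (Sum.inl (i, j)) ((MFC.Mm A 0 1).det) *
            MvPolynomial.pderiv (Sum.inl (k, l)) ((MFC.Mm A 2 3).det) *
            ((if j = k then MvPolynomial.X (Sum.inl (i, l)) else 0) -
              (if l = i then MvPolynomial.X (Sum.inl (k, j)) else 0))) := by
    rw [pb]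
    simp only [MvPolynomial.coeff_sum]
    refine Finset.sum_congr rfl fun i _ => Finset.sum_congr rfl fun j _ =>
      Finset.sum_congr rfl fun k _ => Finset.sum_congr rfl fun l _ => ?_
    rw [← MFC.th_det A 0 1, ← MFC.th_det A 2 3,
      MFC.pderiv_th 0 1 (i, j) ((MFmat A).det) L K hL hK,
      MFC.pderiv_th 2 3 (k, l) ((MFmat A).det) L K hL hK]
    have hcc : ((if j = k then MvPolynomial.X (Sum.inl (i, l)) else 0) -
        (if l = i then MvPolynomial.X (Sum.inl (k, j)) else 0) :
          MvPolynomial ((Fin N × Fin N) ⊕ Fin 4) ℝ) =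
        MvPolynomial.rename Sum.inl
          ((if j = k then u i l else 0) - (if l = i then u k j else 0)) := by
      rw [map_sub]
      congr 1 <;> split_ifs <;> simp [u]
    rw [hcc, MFC.coeff_quad d
      (fun n2 m2 => MvPolynomial.pderiv (i, j) ((((MFmat A).det).coeff m2).coeff n2))
      (fun n2 m2 => MvPolynomial.pderiv (k, l) ((((MFmat A).det).coeff m2).coeff n2))
      ((if j = k then u i l else 0) - (if l = i then u k j else 0)) hm hn hm' hn']
    rfl
  rw [main]
  have hz : (∑ i, ∑ j, ∑ k, ∑ l,
      MvPolynomial.pderiv (Sum.inl (i, j)) ((MFC.Mm A 0 1).det) *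
        MvPolynomial.pderiv (Sum.inl (k, l)) ((MFC.Mm A 2 3).det) *
        ((if j = k then MvPolynomial.X (Sum.inl (i, l)) else 0) -
          (if l = i then MvPolynomial.X (Sum.inl (k, j)) else 0))) = 0 := by
    have step : (∑ i, ∑ j, ∑ k, ∑ l,
        MvPolynomial.pderiv (Sum.inl (i, j)) ((MFC.Mm A 0 1).det) *
          MvPolynomial.pderiv (Sum.inl (k, l)) ((MFC.Mm A 2 3).det) *
          ((if j = k then MvPolynomial.X (Sum.inl (i, l)) else 0) -
            (if l = i then MvPolynomial.X (Sum.inl (k, j)) else 0))) =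
        ∑ i, ∑ j, ∑ k, ∑ l, (MFC.Mm A 0 1).adjugate j i * (MFC.Mm A 2 3).adjugate l k *
          ((if j = k then MFC.Um N i l else 0) - (if l = i then MFC.Um N k j else 0)) := by
      refine Finset.sum_congr rfl fun i _ => Finset.sum_congr rfl fun j _ =>
        Finset.sum_congr rfl fun k _ => Finset.sum_congr rfl fun l _ => ?_
      rw [MFC.grad A 0 1 i j, MFC.grad A 2 3 k l]
      rfl
    rw [step, MFC.quad_eq_trace _ _ (MFC.Um N)]
    exact MFC.key_trace A
  rw [hz, MvPolynomial.coeff_zero]
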